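/- Let s ∈ (0,1], p ∈ [1,∞) with sp < N, and set p*_s := Np/(N − sp). Suppose s̃, p̃ satisfy 0 ≤ s̃ < s, sp/(sp − (p−1)s̃) ≤ p̃ < Np/(N − (s − s̃)p), and p̃ ≠ p. Define q := p·p̃·(s − s̃)/(sp − s̃p̃). Then q ∈ [1, p*_s) and p̃ = spq/(sp + (q − p)s̃). -/

import Mathlib

theorem curve_through_compact_point (N : ℕ) (hN : 1 ≤ N)
    (s p : ℝ) (hs : s ∈ Set.Ioc (0 : ℝ) 1) (hp : 1 ≤ p) (hsp : s * p < N)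
    (s' p' : ℝ) (hs' : s' ∈ Set.Ico (0 : ℝ) s)
    (hp'l : s * p / (s * p - (p - 1) * s') ≤ p')
    (hp'u : p' < N * p / (N - (s - s') * p)) (hpne : p' ≠ p)
    (q : ℝ) (hq : q = p * p' * (s - s') / (s * p - s' * p')) :
    q ∈ Set.Ico (1 : ℝ) (N * p / (N - s * p)) ∧
      p' = s * p * q / (s * p + (q - p) * s') := by
  obtain ⟨hs0, hs1⟩ := hs
  obtain ⟨hs'0, hss'⟩ := hs'
  have hp0 : (0:ℝ) < p := by linarith
  have hNsp : 0 < (N:ℝ) - s * p := by linarith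
  have hd1 : 0 < s * p - (p - 1) * s' := by nlinarith [mul_le_mul_of_nonneg_left hss'.le (by linarith : (0:ℝ) ≤ p - 1)]
  have hp'pos : 0 < p' := lt_of_lt_of_le (div_pos (mul_pos hs0 hp0) hd1) hp'l
  have hd2 : 0 < (N:ℝ) - (s - s') * p := by nlinarith [mul_nonneg hs'0 hp0.le]
  have h1 : p' * ((N:ℝ) - (s - s') * p) < N * p := (lt_div_iff₀ hd2).mp hp'u
  have hd3 : 0 < s * p - s' * p' := by
    nlinarith [mul_le_mul_of_nonneg_left h1.le hs'0,
      mul_pos (mul_pos hp0 (sub_pos.mpr hss')) hNsp]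
  have hl : s * p ≤ p' * (s * p - (p - 1) * s') := (div_le_iff₀ hd1).mp hp'l
  have hq' : q * (s * p - s' * p') = p * p' * (s - s') := by
    rw [hq]; exact div_mul_cancel₀ _ hd3.ne'
  refine ⟨⟨?_, ?_⟩, ?_⟩
  · rw [hq, le_div_iff₀ hd3]; nlinarith
  · rw [hq, div_lt_div_iff₀ hd3 hNsp]
    nlinarith [mul_lt_mul_of_pos_left h1 (mul_pos hs0 hp0)]
  · have key : (s * p + (q - p) * s') * (s * p - s' * p') = p * (s - s') * (s * p) := by
      linear_combination s' * hq'
    have h6 : 0 < p * (s - s') * (s * p) :=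
      mul_pos (mul_pos hp0 (sub_pos.mpr hss')) (mul_pos hs0 hp0)
    have h7 : 0 < s * p + (q - p) * s' := by nlinarith [key, h6, hd3]
    rw [eq_div_iff h7.ne']
    linear_combination -hq'
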